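/- Let A be a 2-sided residuated ∨-semilattice. Then every filter of A is equal to the intersection of the ∨-prime filters of A that include it. -/

import Mathlib

/-- A residuated `∨`-semilattice: a join-semilattice with an associative
multiplication and two residuals. -/
class ResiduatedSupSemilattice (A : Type*) extends SemilatticeSup A, Mul A where
  mul_assoc' : ∀ x y z : A, x * y * z = x * (y * z)
  arr : A → A → A
  sarr : A → A → A
  res_arr : ∀ x y z : A, x * y ≤ z ↔ x ≤ arr y z
  res_sarr : ∀ x y z : A, x * y ≤ z ↔ y ≤ sarr x z

namespace ResiduatedSupSemilattice

variable {A : Type*} [ResiduatedSupSemilattice A]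

/-- A filter: a non-empty upper set closed under multiplication. -/
def RFilter (F : Set A) : Prop :=
  F.Nonempty ∧ IsUpperSet F ∧ ∀ x ∈ F, ∀ y ∈ F, x * y ∈ F

/-- A `→`-prime filter. -/
def ArrPrime (F : Set A) : Prop := ∀ x y : A, arr x y ∈ F ∨ arr y x ∈ F

/-- A `⇝`-prime filter. -/
def SarrPrime (F : Set A) : Prop := ∀ x y : A, sarr x y ∈ F ∨ sarr y x ∈ F

/-- A prime filter: both `→`-prime and `⇝`-prime. -/
def PrimeF (F : Set A) : Prop := ArrPrime F ∧ SarrPrime F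

/-- A `∨`-prime filter. -/
def JoinPrime (F : Set A) : Prop := ∀ x y : A, x ⊔ y ∈ F → x ∈ F ∨ y ∈ F

end ResiduatedSupSemilattice

/-- An integral residuated `∨`-semilattice: the multiplicative unit `1` is
the greatest element. -/
class IntegralResiduatedSupSemilattice (A : Type*) extends
    ResiduatedSupSemilattice A, One A where
  mul_one' : ∀ x : A, x * 1 = x
  one_mul' : ∀ x : A, 1 * x = x
  le_one : ∀ x : A, x ≤ 1

open ResiduatedSupSemilattice

/-- A residuated `∨`-semilattice is 2-sided if `x·y ≤ x` and `x·y ≤ y`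
for all `x, y`. -/
def TwoSided (A : Type*) [ResiduatedSupSemilattice A] : Prop :=
  ∀ x y : A, x * y ≤ x ∧ x * y ≤ y


open ResiduatedSupSemilattice in

section
variable {A : Type*} [ResiduatedSupSemilattice A]

lemma my_mul_le_mul {x x' y y' : A} (hx : x ≤ x') (hy : y ≤ y') : x * y ≤ x' * y' := by
  have h1 : x * y' ≤ x' * y' :=
    (res_arr x y' (x' * y')).mpr (hx.trans ((res_arr x' y' (x' * y')).mp le_rfl))
  have h2 : x * y ≤ x * y' :=
    (res_sarr x y (x * y')).mpr (hy.trans ((res_sarr x y' (x * y')).mp le_rfl))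
  exact h2.trans h1

lemma my_mul_sup_le {x y z : A} : x * (y ⊔ z) ≤ x * y ⊔ x * z :=
  (res_sarr _ _ _).mpr (sup_le ((res_sarr _ _ _).mp le_sup_left)
    ((res_sarr _ _ _).mp le_sup_right))

def pw (u : A) : ℕ → A
  | 0 => u
  | n + 1 => u * pw u n

lemma pw_mono {u v : A} (h : u ≤ v) : ∀ n, pw u n ≤ pw v n
  | 0 => h
  | n + 1 => my_mul_le_mul h (pw_mono h n)

lemma pw_le_self (h2 : TwoSided A) (u : A) : ∀ n, pw u n ≤ u
  | 0 => le_rfl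
  | n + 1 => (h2 u (pw u n)).1

lemma pw_mem (h2 : TwoSided A) {G : Set A} (hG : RFilter G) {u : A} (hu : u ∈ G) :
    ∀ n, pw u n ∈ G
  | 0 => hu
  | n + 1 => hG.2.2 u hu _ (pw_mem h2 hG hu n)

lemma key (h2 : TwoSided A) (u v : A) : ∀ n m, pw (u ⊔ v) (n + m) ≤ pw u n ⊔ pw v m := by
  intro n
  induction n with
  | zero =>
    intro m
    induction m with
    | zero => exact le_rfl
    | succ m ihm =>
      calc pw (u ⊔ v) (0 + (m+1)) = (u ⊔ v) * pw (u ⊔ v) m := by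
            simp [pw, Nat.zero_add]
        _ ≤ u * pw (u ⊔ v) m ⊔ v * pw (u ⊔ v) m := by
            have : (u ⊔ v) * pw (u ⊔ v) m ≤ _ := le_rfl
            exact (res_arr _ _ _).mpr (sup_le ((res_arr _ _ _).mp le_sup_left)
              ((res_arr _ _ _).mp le_sup_right))
        _ ≤ u ⊔ v * (u ⊔ pw v m) := by
            have h1 : u * pw (u ⊔ v) m ≤ u := (h2 _ _).1
            have h2' : v * pw (u ⊔ v) m ≤ v * (u ⊔ pw v m) :=
              my_mul_le_mul le_rfl (by simpa [pw, Nat.zero_add] using ihm)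
            exact sup_le_sup h1 h2'
        _ ≤ u ⊔ pw v (m+1) := by
            refine sup_le le_sup_left (le_trans my_mul_sup_le ?_)
            exact sup_le (le_sup_left.trans' (h2 v u).2) (le_sup_right.trans' le_rfl)
  | succ n ihn =>
    intro m
    induction m with
    | zero =>
      have e : n + 1 + 0 = n + 1 := rfl
      calc pw (u ⊔ v) (n + 1) = (u ⊔ v) * pw (u ⊔ v) n := rfl
        _ ≤ u * pw (u ⊔ v) n ⊔ v * pw (u ⊔ v) n :=
            (res_arr _ _ _).mpr (sup_le ((res_arr _ _ _).mp le_sup_left)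
              ((res_arr _ _ _).mp le_sup_right))
        _ ≤ u * (pw u n ⊔ v) ⊔ v := by
            refine sup_le_sup (my_mul_le_mul le_rfl ?_) (h2 _ _).1
            simpa [pw] using ihn 0
        _ ≤ pw u (n+1) ⊔ pw v 0 := by
            refine sup_le (le_trans my_mul_sup_le (sup_le ?_ ?_)) le_sup_right
            · exact le_sup_left
            · exact le_sup_right.trans' (h2 u v).2
    | succ m ihm =>
      have e1 : n + 1 + (m + 1) = (n + (m + 1)) + 1 := by omega
      calc pw (u ⊔ v) (n + 1 + (m + 1)) = (u ⊔ v) * pw (u ⊔ v) (n + (m+1)) := by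
            rw [e1]; rfl
        _ ≤ u * pw (u ⊔ v) (n + (m+1)) ⊔ v * pw (u ⊔ v) ((n+1) + m) := by
            have e2 : n + (m + 1) = n + 1 + m := by omega
            rw [← e2]
            exact (res_arr _ _ _).mpr (sup_le ((res_arr _ _ _).mp le_sup_left)
              ((res_arr _ _ _).mp le_sup_right))
        _ ≤ u * (pw u n ⊔ pw v (m+1)) ⊔ v * (pw u (n+1) ⊔ pw v m) :=
            sup_le_sup (my_mul_le_mul le_rfl (ihn (m+1))) (my_mul_le_mul le_rfl ihm)
        _ ≤ pw u (n+1) ⊔ pw v (m+1) := by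
            refine sup_le (le_trans my_mul_sup_le (sup_le ?_ ?_))
              (le_trans my_mul_sup_le (sup_le ?_ ?_))
            · exact le_sup_left
            · exact le_sup_right.trans' (h2 _ _).2
            · exact le_sup_left.trans' (h2 _ _).2
            · exact (le_sup_right : pw v (m+1) ≤ _)

/-- The filter generated by a filter `G` and an element `x`. -/
def genF (G : Set A) (x : A) : Set A := {z | ∃ g ∈ G, ∃ n, pw (g * x) n ≤ z}

lemma genF_filter (h2 : TwoSided A) {G : Set A} (hG : RFilter G) (x : A) :
    RFilter (genF G x) := by
  obtain ⟨g0, hg0⟩ := hG.1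
  refine ⟨⟨x, g0, hg0, 0, (h2 g0 x).2⟩, ?_, ?_⟩
  · intro a b hab ⟨g, hg, n, hn⟩; exact ⟨g, hg, n, hn.trans hab⟩
  · rintro a ⟨g, hg, n, hn⟩ b ⟨g', hg', m, hm⟩
    refine ⟨g * g', hG.2.2 g hg g' hg', n + m + 1, ?_⟩
    have h1 : pw (g * g' * x) n ≤ pw (g * x) n :=
      pw_mono (my_mul_le_mul (h2 g g').1 le_rfl) n
    have h1' : pw (g * g' * x) m ≤ pw (g' * x) m :=
      pw_mono (my_mul_le_mul (h2 g g').2 le_rfl) m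
    have h3 : pw (g * g' * x) (n + m + 1) ≤ pw (g*g'*x) n * pw (g*g'*x) m := by
      clear h1 h1' hn hm
      induction n with
      | zero => rw [Nat.zero_add]; exact le_rfl
      | succ k ih =>
        have e : k + 1 + m + 1 = (k + m + 1) + 1 := by omega
        rw [e]
        exact le_trans (my_mul_le_mul le_rfl ih)
          (le_of_eq (ResiduatedSupSemilattice.mul_assoc' _ _ _).symm)
    exact h3.trans (le_trans (my_mul_le_mul h1 h1') (my_mul_le_mul hn hm))

lemma self_subset_genF {G : Set A} (hG : RFilter G) (x : A) (h2 : TwoSided A) :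
    G ⊆ genF G x := fun g hg => ⟨g, hg, 0, (h2 g x).1⟩

lemma mem_genF_self {G : Set A} (hG : RFilter G) (x : A) (h2 : TwoSided A) :
    x ∈ genF G x := by
  obtain ⟨g0, hg0⟩ := hG.1
  exact ⟨g0, hg0, 0, (h2 g0 x).2⟩

end

/-- Every filter of a 2-sided residuated `∨`-semilattice is the intersection
of the `∨`-prime filters including it. -/
theorem filter_eq_sInter_sup_prime {A : Type*} [ResiduatedSupSemilattice A]
    (h2 : TwoSided A) (F : Set A) (hF : RFilter F) :
    F = ⋂₀ {G : Set A | RFilter G ∧ JoinPrime G ∧ F ⊆ G} := by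
  have sub1 : F ⊆ ⋂₀ {G : Set A | RFilter G ∧ JoinPrime G ∧ F ⊆ G} := by
    intro a ha G hG; exact hG.2.2 ha
  refine le_antisymm sub1 ?_
  intro a ha
  by_contra haF
  set S : Set (Set A) := {G | RFilter G ∧ F ⊆ G ∧ a ∉ G} with hS
  have hFS : F ∈ S := ⟨hF, subset_rfl, haF⟩
  obtain ⟨M, hFM, hMS, hMmax⟩ : ∃ M, F ⊆ M ∧ M ∈ S ∧ ∀ G ∈ S, M ⊆ G → G = M := by
    have hub : ∀ c ⊆ S, IsChain (· ⊆ ·) c → c.Nonempty →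
        ∃ ub ∈ S, ∀ s ∈ c, s ⊆ ub := by
      intro c hcS hchain hcne
      refine ⟨⋃₀ c, ⟨⟨?_, ?_, ?_⟩, ?_, ?_⟩, fun s hs => Set.subset_sUnion_of_mem hs⟩
      · obtain ⟨G, hG⟩ := hcne
        obtain ⟨g, hg⟩ := (hcS hG).1.1
        exact ⟨g, G, hG, hg⟩
      · rintro p q hpq ⟨G, hG, hpG⟩
        exact ⟨G, hG, (hcS hG).1.2.1 hpq hpG⟩
      · rintro p ⟨G, hG, hpG⟩ q ⟨G', hG', hqG'⟩
        rcases hchain.total hG hG' with h | h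
        · exact ⟨G', hG', (hcS hG').1.2.2 p (h hpG) q hqG'⟩
        · exact ⟨G, hG, (hcS hG).1.2.2 p hpG q (h hqG')⟩
      · exact ((hcS hcne.choose_spec).2.1).trans
          (Set.subset_sUnion_of_mem hcne.choose_spec)
      · rintro ⟨G, hG, haG⟩
        exact (hcS hG).2.2 haG
    obtain ⟨M, hFM, hM⟩ := zorn_subset_nonempty S hub F hFS
    exact ⟨M, hFM, hM.1, fun G hG hMG => le_antisymm (hM.2 hG hMG) hMG⟩
  obtain ⟨hMfil, hFMsub, haM⟩ := hMS
  -- M is join-prime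
  have hMprime : JoinPrime M := by
    intro x y hxy
    by_contra hcon
    push_neg at hcon
    obtain ⟨hx, hy⟩ := hcon
    -- a belongs to genF M x and genF M y
    have key_mem : ∀ z : A, z ∉ M → a ∈ genF M z := by
      intro z hz
      by_contra haz
      have : genF M z = M := hMmax _ ⟨genF_filter h2 hMfil z,
        hFMsub.trans (self_subset_genF hMfil z h2), haz⟩ (self_subset_genF hMfil z h2)
      exact hz (this ▸ mem_genF_self hMfil z h2)
    obtain ⟨g, hg, n, hn⟩ := key_mem x hx
    obtain ⟨g', hg', m, hm⟩ := key_mem y hy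
    set k : A := g * g' with hk
    have hkM : k ∈ M := hMfil.2.2 g hg g' hg'
    have h1 : pw (k * x) n ≤ a := (pw_mono (my_mul_le_mul (h2 g g').1 le_rfl) n).trans hn
    have h2' : pw (k * y) m ≤ a := (pw_mono (my_mul_le_mul (h2 g g').2 le_rfl) m).trans hm
    have h3 : k * (x ⊔ y) ≤ (k * x) ⊔ (k * y) := my_mul_sup_le
    have h4 : pw (k * (x ⊔ y)) (n + m) ≤ a :=
      ((pw_mono h3 (n + m)).trans (key h2 (k * x) (k * y) n m)).trans (sup_le h1 h2')
    have h5 : k * (x ⊔ y) ∈ M := hMfil.2.2 k hkM _ hxy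
    exact haM (hMfil.2.1 h4 (pw_mem h2 hMfil h5 (n + m)))
  exact haM (ha M ⟨hMfil, hMprime, hFMsub⟩)
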